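/- Let G be a bipartite graph with partite sets X and Y, and let f : X → ℤ⁺ assign a positive integer to each vertex of X. If for every subset S ⊆ X we have |N_G(S)| ≥ Σ_{v∈S} f(v), then G has a subgraph H with X ⊆ V(H), d_H(v) = f(v) for every v ∈ X, and d_H(u) = 1 for every u ∈ Y ∩ V(H). -/

import Mathlib

open SimpleGraph

/-- The number of connected components of `G − S`. -/
noncomputable def numComp {V : Type*} (G : SimpleGraph V) (S : Set V) : ℕ :=
  Nat.card (G.induce Sᶜ).ConnectedComponent

/-- `G` is `t`-tough: every cutset `S` satisfies `|S| ≥ t · c(G − S)`. -/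
def Tough {V : Type*} (t : ℝ) (G : SimpleGraph V) : Prop :=
  ∀ S : Set V, 2 ≤ numComp G S → t * (numComp G S : ℝ) ≤ (S.ncard : ℝ)

/-- `G` contains no induced copy of `H`. -/
def InducedFree {W V : Type*} (H : SimpleGraph W) (G : SimpleGraph V) : Prop :=
  ¬ ∃ f : W ↪ V, ∀ a b : W, G.Adj (f a) (f b) ↔ H.Adj a b

/-- `P₃ ∪ P₁`: a path on three vertices plus one isolated vertex. -/
def P3UnionP1 : SimpleGraph (Fin 4) := SimpleGraph.fromEdgeSet {s(0, 1), s(1, 2)}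

/-- `P₃ ∪ 2P₁`: a path on three vertices plus two isolated vertices. -/
def P3Union2P1 : SimpleGraph (Fin 5) := SimpleGraph.fromEdgeSet {s(0, 1), s(1, 2)}

/-- Weighted Hall theorem: a star-matching with prescribed star sizes centered at `X`. -/
theorem stmt_4 {V : Type*} [Fintype V] [DecidableEq V] (G : SimpleGraph V)
    (X Y : Finset V) (hdisj : Disjoint X Y) (hcover : ∀ v : V, v ∈ X ∨ v ∈ Y)
    (hbip : ∀ u v : V, G.Adj u v → (u ∈ X ∧ v ∈ Y) ∨ (u ∈ Y ∧ v ∈ X))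
    (f : V → ℕ) (hf : ∀ x ∈ X, 0 < f x)
    (hHall : ∀ S ⊆ X, (∑ v ∈ S, f v) ≤ {y : V | ∃ x ∈ S, G.Adj x y}.ncard) :
    ∃ H : G.Subgraph, ↑X ⊆ H.verts ∧ (∀ v ∈ X, (H.neighborSet v).ncard = f v) ∧
      ∀ u ∈ H.verts, u ∈ Y → (H.neighborSet u).ncard = 1 := by
  classical
  let t : ((x : {x : V // x ∈ X}) × Fin (f x.1)) → Finset V :=
    fun i => (G.neighborSet (i.1 : V)).toFinset
  have hall : ∀ s : Finset ((x : {x : V // x ∈ X}) × Fin (f x.1)),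
      s.card ≤ (s.biUnion t).card := by
    intro s
    set S : Finset V := s.image (fun i => (i.1 : V)) with hS
    have hSX : S ⊆ X := by
      intro v hv
      rw [hS, Finset.mem_image] at hv
      obtain ⟨i, _, rfl⟩ := hv
      exact i.1.2
    have h1 : s.card ≤ ∑ v ∈ S, f v := by
      rw [Finset.card_eq_sum_card_fiberwise
        (f := fun i => (i.1 : V)) (t := S)
        (fun i hi => Finset.mem_image_of_mem _ hi)]
      apply Finset.sum_le_sum
      intro v hv
      have : ((s.filter fun i => (i.1 : V) = v).card) ≤ (Finset.range (f v)).card := by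
        apply Finset.card_le_card_of_injOn (fun i => (i.2 : ℕ))
        · intro i hi
          rw [Finset.mem_coe, Finset.mem_filter] at hi
          rw [Finset.mem_coe, Finset.mem_range, ← hi.2]
          exact i.2.isLt
        · rintro ⟨⟨a, ha⟩, b⟩ hi ⟨⟨c, hc⟩, d⟩ hj hbd
          simp only [Finset.coe_filter, Set.mem_setOf_eq] at hi hj
          have hac : a = c := hi.2.trans hj.2.symm
          subst hac
          simp only at hbd
          simp [Fin.ext_iff, hbd]
      simpa using this
    have h2 : (∑ v ∈ S, f v) ≤ {y : V | ∃ x ∈ S, G.Adj x y}.ncard := hHall S hSX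
    have h3 : {y : V | ∃ x ∈ S, G.Adj x y}.ncard = (s.biUnion t).card := by
      rw [← Set.ncard_coe_finset]
      congr 1
      ext y
      simp only [Set.mem_setOf_eq, Finset.coe_biUnion, Set.mem_iUnion, Finset.mem_coe,
        Finset.mem_biUnion, hS, Finset.mem_image, t, Set.mem_toFinset, mem_neighborSet]
      constructor
      · rintro ⟨x, ⟨i, hi, rfl⟩, hadj⟩
        exact ⟨i, hi, hadj⟩
      · rintro ⟨i, hi, hadj⟩
        exact ⟨↑i.1, ⟨i, hi, rfl⟩, hadj⟩
    omega
  obtain ⟨g, ginj, hg⟩ := (Finset.all_card_le_biUnion_card_iff_exists_injective t).mp hall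
  have hgadj : ∀ i, G.Adj (i.1 : V) (g i) := by
    intro i
    have := hg i
    simpa [t, Set.mem_toFinset] using this
  have hgY : ∀ i, g i ∈ Y := by
    intro i
    rcases hbip _ _ (hgadj i) with ⟨_, h⟩ | ⟨h, _⟩
    · exact h
    · exact absurd i.1.2 (Finset.disjoint_right.mp hdisj h)
  refine ⟨{ verts := ↑X ∪ Set.range g,
            Adj := fun u v => (∃ i, u = ↑i.1 ∧ v = g i) ∨ (∃ i, v = ↑i.1 ∧ u = g i),
            adj_sub := by
              rintro u v (⟨i, rfl, rfl⟩ | ⟨i, rfl, rfl⟩)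
              · exact hgadj i
              · exact (hgadj i).symm
            edge_vert := by
              rintro u v (⟨i, rfl, -⟩ | ⟨i, -, rfl⟩)
              · exact Or.inl i.1.2
              · exact Or.inr ⟨i, rfl⟩
            symm := by
              constructor
              rintro u v (h | h)
              · exact Or.inr h
              · exact Or.inl h }, ?_, ?_, ?_⟩
  · exact Set.subset_union_left
  · intro v hv
    have key : ({w | (∃ i, v = ↑i.1 ∧ w = g i) ∨ (∃ i, w = ↑i.1 ∧ v = g i)} : Set V)
        = Set.range (fun j : Fin (f v) => g ⟨⟨v, hv⟩, j⟩) := by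
      ext w
      simp only [Set.mem_setOf_eq, Set.mem_range]
      constructor
      · rintro (⟨⟨⟨a, ha⟩, b⟩, hva, rfl⟩ | ⟨i, rfl, hvg⟩)
        · simp only at hva
          subst hva
          exact ⟨b, rfl⟩
        · exact absurd hv (Finset.disjoint_right.mp hdisj (hvg ▸ hgY i))
      · rintro ⟨j, rfl⟩
        exact Or.inl ⟨⟨⟨v, hv⟩, j⟩, rfl, rfl⟩
    show ({w | _} : Set V).ncard = f v
    rw [key]
    have hinj : Function.Injective (fun j : Fin (f v) => g ⟨⟨v, hv⟩, j⟩) := by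
      intro a b hab
      have := ginj hab
      simpa [Sigma.mk.inj_iff] using this
    rw [Set.ncard_eq_toFinset_card', Set.toFinset_range, Finset.card_image_of_injective _ hinj]
    simp
  · intro u hu huY
    have huX : u ∉ (X : Finset V) := fun h => Finset.disjoint_left.mp hdisj h huY
    have : u ∈ Set.range g := by
      rcases hu with h | h
      · exact absurd h huX
      · exact h
    obtain ⟨i0, hi0⟩ := this
    have key : ({w | (∃ i, u = ↑i.1 ∧ w = g i) ∨ (∃ i, w = ↑i.1 ∧ u = g i)} : Set V)
        = {(i0.1 : V)} := by
      ext w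
      simp only [Set.mem_setOf_eq, Set.mem_singleton_iff]
      constructor
      · rintro (⟨i, rfl, rfl⟩ | ⟨i, rfl, hug⟩)
        · exact absurd i.1.2 huX
        · rw [ginj (hi0.trans hug)]
      · rintro rfl
        exact Or.inr ⟨i0, rfl, hi0.symm⟩
    show ({w | _} : Set V).ncard = 1
    rw [key, Set.ncard_singleton]
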